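/- arXiv:1805.05637 — 2 statements merged into one kernel-verified Lean document; each statement's English description precedes it below -/
import Mathlib

section
/- Let G be a countable directed graph which is cofinal and whose set NW_G of non-wandering vertices is non-empty. Then every infinite path eventually stays in NW_G: for every p ∈ P(G) there is an n ∈ ℕ such that s(p_i) ∈ NW_G for all i ≥ n. Equivalently, P(G) = ⋃_{μ ∈ P_f(G)} Z(μ)P(NW_G), where Z(μ)P(NW_G) = {p ∈ Z(μ) : s(p_i) ∈ NW_G for all i > |μ|}. -/
open MeasureTheory
open scoped ENNReal

/-- A countable directed graph: countable sets of vertices and arrows together with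
source and range maps. -/
structure CDG where
  V : Type
  A : Type
  countV : Countable V
  countA : Countable A
  src : A → V
  rng : A → V

attribute [instance] CDG.countV CDG.countA

namespace CDG

/-- The space `P(G)` of infinite paths in `G`. -/
abbrev PathSpace (G : CDG) : Type :=
  {p : ℕ → G.A // ∀ i : ℕ, G.rng (p i) = G.src (p (i + 1))}

/-- The source vertex of an infinite path. -/
def isrc {G : CDG} (p : G.PathSpace) : G.V := G.src (p.1 0)

/-- The shift map `σ` on `P(G)`. -/
def shift {G : CDG} (p : G.PathSpace) : G.PathSpace :=
  ⟨fun i => p.1 (i + 1), fun i => p.2 (i + 1)⟩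

/-- A countable set carries the discrete (Borel) σ-algebra. -/
instance (G : CDG) : MeasurableSpace G.A := ⊤

/-- A finite path in `G`: a base vertex together with a (possibly empty) string of
composable arrows starting at the base vertex.  A finite path with no arrows is a vertex. -/
structure FinPath (G : CDG) where
  base : G.V
  arrows : List G.A
  head_src : ∀ a ∈ arrows.head?, G.src a = base
  chain : arrows.Chain' fun a b => G.rng a = G.src b

namespace FinPath

variable {G : CDG}

/-- The length `|μ|` of a finite path. -/
def length (μ : FinPath G) : ℕ := μ.arrows.length

/-- The source `s(μ)` of a finite path. -/
def fsrc (μ : FinPath G) : G.V := μ.base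

/-- The range `r(μ)` of a finite path. -/
def frng (μ : FinPath G) : G.V := μ.arrows.getLast?.elim μ.base G.rng

/-- A vertex, regarded as a finite path of length `0`. -/
def ofVertex (G : CDG) (v : G.V) : FinPath G :=
  ⟨v, [], by intro a ha; simp at ha, List.isChain_nil⟩

/-- Concatenation `μδ` of composable finite paths. -/
def concat (μ δ : FinPath G) (h : δ.base = μ.frng) : FinPath G where
  base := μ.base
  arrows := μ.arrows ++ δ.arrows
  head_src := by
    intro a ha
    cases hμ : μ.arrows with
    | nil =>
        rw [hμ] at ha
        simp only [List.nil_append] at ha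
        have h1 : G.src a = δ.base := δ.head_src a ha
        have h2 : μ.frng = μ.base := by simp [FinPath.frng, hμ]
        rw [h1, h, h2]
    | cons b l =>
        rw [hμ] at ha
        simp only [List.cons_append, List.head?_cons, Option.mem_def,
          Option.some.injEq] at ha
        cases ha
        exact μ.head_src _ (by rw [hμ]; rfl)
  chain := by
    refine List.IsChain.append μ.chain δ.chain ?_
    intro x hx y hy
    rw [Option.mem_def] at hx
    have h1 : μ.frng = G.rng x := by simp [FinPath.frng, hx]
    have h2 : G.src y = δ.base := δ.head_src y hy
    rw [h2, h, h1]

end FinPath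

/-- The extension of a potential `F : G_Ar → ℝ` to finite paths:
`F(μ) = Σ_{i} F(a_i)`, with `F(v) = 0` for vertices. -/
def pot {G : CDG} (F : G.A → ℝ) (μ : FinPath G) : ℝ := (μ.arrows.map F).sum

/-- The cylinder set `Z(μ)` of a finite path `μ`. -/
def cyl {G : CDG} (μ : FinPath G) : Set G.PathSpace :=
  {p | G.src (p.1 0) = μ.base ∧
    ∀ (i : ℕ) (h : i < μ.arrows.length), p.1 i = μ.arrows.get ⟨i, h⟩}

/-- The cylinder set `Z(v)` of a vertex `v`. -/
def cylV (G : CDG) (v : G.V) : Set G.PathSpace := {p | G.src (p.1 0) = v}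

/-- An `e^{βF}`-conformal measure on `P(G)`: a non-zero Borel measure giving finite
measure to each `Z(v)` and satisfying `m(σ(B ∩ Z(a))) = e^{βF(a)} m(B ∩ Z(a))`. -/
structure IsConformal (G : CDG) (F : G.A → ℝ) (β : ℝ)
    (m : Measure G.PathSpace) : Prop where
  ne_zero : m ≠ 0
  vert_fin : ∀ v : G.V, m (cylV G v) < ⊤
  conformal : ∀ (a : G.A) (B : Set G.PathSpace), MeasurableSet B →
      m (shift '' (B ∩ {p : G.PathSpace | p.1 0 = a})) =
        ENNReal.ofReal (Real.exp (β * F a)) * m (B ∩ {p : G.PathSpace | p.1 0 = a})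

/-- The set `NW_G` of non-wandering vertices: those supporting a loop. -/
def NW (G : CDG) : Set G.V :=
  {v | ∃ μ : FinPath G, 0 < μ.length ∧ μ.fsrc = v ∧ μ.frng = v}

/-- The set `V_∞` of sinks and infinite emitters. -/
def Vinf (G : CDG) : Set G.V :=
  {v | (∀ a : G.A, G.src a ≠ v) ∨ {a : G.A | G.src a = v}.Infinite}

/-- A hereditary subset of vertices. -/
def Hereditary (G : CDG) (H : Set G.V) : Prop :=
  ∀ a : G.A, G.src a ∈ H → G.rng a ∈ H

/-- A saturated subset of vertices. -/
def Saturated (G : CDG) (H : Set G.V) : Prop :=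
  ∀ v : G.V, v ∉ Vinf G → (∀ a : G.A, G.src a = v → G.rng a ∈ H) → v ∈ H

/-- `G` is cofinal when the only non-empty hereditary and saturated subset of
vertices is the set of all vertices. -/
def Cofinal (G : CDG) : Prop :=
  ∀ H : Set G.V, H.Nonempty → Hereditary G H → Saturated G H → H = Set.univ

/-- `P(G)_rec`: the paths passing through every arrow of `NW_Ar` infinitely often. -/
def recSet (G : CDG) : Set G.PathSpace :=
  {p | ∀ a : G.A, G.src a ∈ NW G → ∀ n : ℕ, ∃ i ≥ n, p.1 i = a}

/-- `P(G)_wan`: the paths visiting every vertex at most finitely many times. -/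
def wanSet (G : CDG) : Set G.PathSpace :=
  {p | ∀ v : G.V, {i : ℕ | G.src (p.1 i) = v}.Finite}

/-- The matrix entry `A(β)^n_{v,w} = Σ_μ e^{-βF(μ)} ∈ [0,∞]`, summing over finite
paths `μ` of length `n` with `s(μ) = v` and `r(μ) = w`. -/
noncomputable def Apow (G : CDG) (F : G.A → ℝ) (β : ℝ) (n : ℕ) (v w : G.V) : ℝ≥0∞ :=
  ∑' μ : {μ : FinPath G // μ.length = n ∧ μ.fsrc = v ∧ μ.frng = w},
    ENNReal.ofReal (Real.exp (-(β * pot F μ.1)))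

/-- An `A(β)`-harmonic vector: non-zero, finite, non-negative, and harmonic at
every vertex. -/
def IsHarmonicVec (G : CDG) (F : G.A → ℝ) (β : ℝ) (ψ : G.V → ℝ≥0∞) : Prop :=
  ψ ≠ 0 ∧ (∀ v : G.V, ψ v ≠ ⊤) ∧
    ∀ v : G.V, ψ v =
      ∑' a : {a : G.A // G.src a = v},
        ENNReal.ofReal (Real.exp (-(β * F a.1))) * ψ (G.rng a.1)

end CDG

namespace CDG

variable {G : CDG}

/-- One-step reachability. -/
def Step (G : CDG) (v w : G.V) : Prop := ∃ a : G.A, G.src a = v ∧ G.rng a = w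

/-- Reachability by finite paths. -/
abbrev Reach (G : CDG) : G.V → G.V → Prop := Relation.ReflTransGen (Step G)

lemma reach_of_chain : ∀ (l : List G.A) (v : G.V),
    (∀ a ∈ l.head?, G.src a = v) → l.Chain' (fun a b => G.rng a = G.src b) →
    Reach G v (l.getLast?.elim v G.rng)
  | [], v, _, _ => Relation.ReflTransGen.refl
  | a :: l, v, hhead, hchain => by
    have hsa : G.src a = v := hhead a rfl
    replace hchain := List.isChain_cons.mp hchain
    have ih := reach_of_chain l (G.rng a)
      (fun b hb => (hchain.1 b hb).symm) hchain.2
    have hlast : (a :: l).getLast?.elim v G.rng = l.getLast?.elim (G.rng a) G.rng := by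
      cases l with
      | nil => rfl
      | cons b l =>
        cases hx : (b :: l).getLast? with
        | none => simp [List.getLast?_eq_none_iff] at hx
        | some x => simp [List.getLast?_cons_cons, hx]
    rw [hlast]
    exact Relation.ReflTransGen.head ⟨a, hsa, rfl⟩ ih

lemma list_of_reach {v w : G.V} (h : Reach G v w) :
    ∃ l : List G.A, (∀ a ∈ l.head?, G.src a = v) ∧
      l.Chain' (fun a b => G.rng a = G.src b) ∧ l.getLast?.elim v G.rng = w := by
  induction h using Relation.ReflTransGen.head_induction_on with
  | refl => exact ⟨[], by simp, List.isChain_nil, rfl⟩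
  | head hstep _ ih =>
    obtain ⟨b, hb1, hb2⟩ := hstep
    obtain ⟨l, hh, hc, hl⟩ := ih
    refine ⟨b :: l, ?_, ?_, ?_⟩
    · intro c hc'
      have : b = c := by simpa using hc'
      rw [← this, hb1]
    · exact List.isChain_cons.mpr ⟨fun d hd => by rw [hb2]; exact (hh d hd).symm, hc⟩
    · cases l with
      | nil => simpa [hb2] using hl
      | cons d l => simpa [List.getLast?_cons] using hl

lemma nw_iff {v : G.V} : v ∈ NW G ↔ ∃ a : G.A, G.src a = v ∧ Reach G (G.rng a) v := by
  constructor
  · rintro ⟨μ, hlen, hs, hr⟩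
    have hch := μ.chain
    have hhd := μ.head_src
    have hfr : μ.arrows.getLast?.elim μ.base G.rng = v := hr
    have hbase : μ.base = v := hs
    rcases hμ : μ.arrows with _ | ⟨a, l⟩
    · rw [FinPath.length, hμ] at hlen; simp at hlen
    · rw [hμ] at hch hhd hfr
      have hsa : G.src a = v := by rw [hhd a rfl, hbase]
      replace hch := List.isChain_cons.mp hch
      have hreach := reach_of_chain l (G.rng a)
        (fun b hb => (hch.1 b hb).symm) hch.2
      have hlast : l.getLast?.elim (G.rng a) G.rng = v := by
        cases l with
        | nil => simpa using hfr
        | cons d l' => simpa [List.getLast?_cons] using hfr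
      exact ⟨a, hsa, hlast ▸ hreach⟩
  · rintro ⟨a, ha, hr⟩
    obtain ⟨l, hh, hc, hl⟩ := list_of_reach hr
    refine ⟨⟨v, a :: l, ?_, ?_⟩, Nat.succ_pos _, rfl, ?_⟩
    · intro b hb
      have : a = b := by simpa using hb
      rw [← this, ha]
    · exact List.isChain_cons.mpr ⟨fun d hd => (hh d hd).symm, hc⟩
    · show (a :: l).getLast?.elim v G.rng = v
      cases l with
      | nil => simpa using hl
      | cons d l' => simpa [List.getLast?_cons] using hl

lemma reach_all (hcof : Cofinal G) {w : G.V} (hw : w ∈ NW G) (v : G.V) :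
    Reach G v w := by
  by_contra hv
  have hT : ({x | ¬ Reach G x w} : Set G.V) = Set.univ := by
    refine hcof _ ⟨v, hv⟩ ?_ ?_
    · intro a ha hr
      exact ha (Relation.ReflTransGen.head ⟨a, rfl, rfl⟩ hr)
    · intro x _ hall hx
      rcases hx.cases_head with heq | ⟨c, ⟨b, hb1, hb2⟩, hc⟩
      · obtain ⟨a, ha, hra⟩ := nw_iff.mp hw
        exact hall a (by rw [ha, heq]) hra
      · exact hall b hb1 (hb2 ▸ hc)
  have : w ∈ ({x | ¬ Reach G x w} : Set G.V) := hT ▸ Set.mem_univ w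
  exact this Relation.ReflTransGen.refl

lemma nw_hereditary (hcof : Cofinal G) : Hereditary G (NW G) := by
  intro a ha
  have hr : Reach G (G.rng a) (G.src a) := reach_all hcof ha _
  rcases hr.cases_head with heq | ⟨c, ⟨b, hb1, hb2⟩, hc⟩
  · rw [heq]; exact ha
  · exact nw_iff.mpr ⟨b, hb1, by
      rw [hb2]
      exact hc.trans (Relation.ReflTransGen.single ⟨a, rfl, rfl⟩)⟩

end CDG

open CDG in
/-- for a cofinal graph with `NW_G ≠ ∅`, every infinite path eventually
stays in `NW_G`. -/
theorem stmt5 (G : CDG) (hcof : Cofinal G) (hne : (NW G).Nonempty)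
    (p : G.PathSpace) :
    ∃ n : ℕ, ∀ i ≥ n, G.src (p.1 i) ∈ NW G := by
  have hher := nw_hereditary hcof
  set H : Set G.V :=
    {v | ∀ q : G.PathSpace, G.src (q.1 0) = v →
      ∃ n : ℕ, ∀ i ≥ n, G.src (q.1 i) ∈ NW G} with hHdef
  have hHne : H.Nonempty := by
    obtain ⟨u, hu⟩ := hne
    refine ⟨u, fun q hq => ?_⟩
    have hall : ∀ i, G.src (q.1 i) ∈ NW G := by
      intro i
      induction i with
      | zero => rw [hq]; exact hu
      | succ j ih => rw [← q.2 j]; exact hher (q.1 j) ih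
    exact ⟨0, fun i _ => hall i⟩
  have hHher : Hereditary G H := by
    intro a ha q hq
    have hq' : ∀ i, G.rng ((fun i => match i with
        | 0 => a
        | Nat.succ j => q.1 j) i) = G.src ((fun i => match i with
        | 0 => a
        | Nat.succ j => q.1 j) (i + 1)) := by
      intro i
      cases i with
      | zero => exact hq.symm
      | succ j => exact q.2 j
    obtain ⟨n, hn⟩ := ha ⟨_, hq'⟩ rfl
    exact ⟨n, fun i hi => hn (i + 1) (Nat.le_succ_of_le hi)⟩
  have hHsat : Saturated G H := by
    intro v _ hall q hq
    have h0 : G.src ((shift q).1 0) = G.rng (q.1 0) := (q.2 0).symm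
    obtain ⟨n, hn⟩ := hall (q.1 0) hq (shift q) h0
    refine ⟨n + 1, fun i hi => ?_⟩
    obtain ⟨j, rfl⟩ : ∃ j, i = j + 1 := ⟨i - 1, by omega⟩
    exact hn j (by omega)
  have hHuniv := hcof H hHne hHher hHsat
  exact Set.eq_univ_iff_forall.mp hHuniv (G.src (p.1 0)) p rfl
end

section
/- Let G be a countable directed graph which is strongly connected (for every pair of vertices v, w there is a finite path of positive length from v to w), F a potential on G, and β ∈ ℝ. Then for any two vertices v, w of G: Σ_{n=0}^∞ A(β)^n_{v,v} = ∞ if and only if Σ_{n=0}^∞ A(β)^n_{w,w} = ∞. -/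
open MeasureTheory
open scoped ENNReal

namespace CDG

namespace FinPath

theorem ext' {G : CDG} {μ δ : FinPath G} (h1 : μ.base = δ.base)
    (h2 : μ.arrows = δ.arrows) : μ = δ := by
  cases μ; cases δ; simp_all

theorem concat_length {G : CDG} (μ δ : FinPath G) (h : δ.base = μ.frng) :
    (μ.concat δ h).length = μ.length + δ.length := by
  simp [concat, length]

theorem concat_fsrc {G : CDG} (μ δ : FinPath G) (h : δ.base = μ.frng) :
    (μ.concat δ h).fsrc = μ.fsrc := rfl

theorem concat_frng {G : CDG} (μ δ : FinPath G) (h : δ.base = μ.frng) :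
    (μ.concat δ h).frng = δ.frng := by
  rcases hd : δ.arrows with _ | ⟨a, l⟩
  · have h1 : δ.frng = δ.base := by simp [frng, hd]
    rw [h1, h]
    simp [frng, concat, hd]
  · have hne : δ.arrows ≠ [] := by rw [hd]; simp
    have hgl : (μ.arrows ++ δ.arrows).getLast? = δ.arrows.getLast? := by
      rw [List.getLast?_append_of_ne_nil _ hne]
    obtain ⟨y, hy⟩ : ∃ y, δ.arrows.getLast? = some y := by
      rw [hd]; exact ⟨(a :: l).getLast (by simp), (List.getLast?_eq_getLast (by simp))⟩
    simp [frng, concat, hgl, hy]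

theorem concat_pot {G : CDG} (F : G.A → ℝ) (μ δ : FinPath G) (h : δ.base = μ.frng) :
    pot F (μ.concat δ h) = pot F μ + pot F δ := by
  simp [pot, concat]

end FinPath

open FinPath in
theorem apow_supermul (G : CDG) (F : G.A → ℝ) (β : ℝ) (m n : ℕ) (u x w : G.V) :
    Apow G F β m u x * Apow G F β n x w ≤ Apow G F β (m + n) u w := by
  set S1 := {μ : FinPath G // μ.length = m ∧ μ.fsrc = u ∧ μ.frng = x}
  set S2 := {μ : FinPath G // μ.length = n ∧ μ.fsrc = x ∧ μ.frng = w}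
  have key : (∑' p : S1 × S2,
      ENNReal.ofReal (Real.exp (-(β * (pot F p.1.1 + pot F p.2.1)))))
      = Apow G F β m u x * Apow G F β n x w := by
    rw [ENNReal.tsum_prod (f := fun (a : S1) (b : S2) =>
      ENNReal.ofReal (Real.exp (-(β * (pot F a.1 + pot F b.1))))), Apow, Apow]
    simp only [mul_add, neg_add, Real.exp_add,
      ENNReal.ofReal_mul (Real.exp_nonneg _)]
    simp only [ENNReal.tsum_mul_left, ENNReal.tsum_mul_right]
    rfl
  rw [← key, Apow]
  have comp : ∀ p : S1 × S2, p.2.1.base = p.1.1.frng := fun p => by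
    have h1 : p.2.1.base = x := p.2.2.2.1
    rw [h1, p.1.2.2.2]
  refine Summable.tsum_le_tsum_of_inj
    (fun p : S1 × S2 => (⟨p.1.1.concat p.2.1 (comp p), by
      refine ⟨?_, ?_, ?_⟩
      · rw [concat_length, p.1.2.1, p.2.2.1]
      · rw [concat_fsrc, p.1.2.2.1]
      · rw [concat_frng, p.2.2.2.2]⟩ :
      {μ : FinPath G // μ.length = m + n ∧ μ.fsrc = u ∧ μ.frng = w}))
    ?_ (fun c _ => zero_le) (fun p => le_of_eq (by rw [concat_pot]))
    ENNReal.summable ENNReal.summable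
  rintro ⟨⟨μ1, h1⟩, ⟨δ1, h1'⟩⟩ ⟨⟨μ2, h2⟩, ⟨δ2, h2'⟩⟩ hpq
  simp only [Subtype.mk.injEq] at hpq
  have harr : μ1.arrows ++ δ1.arrows = μ2.arrows ++ δ2.arrows :=
    congrArg FinPath.arrows hpq
  have hlen : μ1.arrows.length = μ2.arrows.length := by
    have := h1.1.trans h2.1.symm
    exact this
  obtain ⟨ha, hb⟩ := List.append_inj harr hlen
  have hbase := congrArg FinPath.base hpq
  have hμ : μ1 = μ2 := ext' hbase ha
  have hδ : δ1 = δ2 := ext' (by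
    have e1 : δ1.base = x := h1'.2.1
    have e2 : δ2.base = x := h2'.2.1
    rw [e1, e2]) hb
  simp [hμ, hδ]

theorem apow_pos (G : CDG) (F : G.A → ℝ) (β : ℝ) {m : ℕ} {u w : G.V}
    (μ : FinPath G) (h1 : μ.length = m) (h2 : μ.fsrc = u) (h3 : μ.frng = w) :
    0 < Apow G F β m u w := by
  refine lt_of_lt_of_le ?_ (ENNReal.le_tsum
    (⟨μ, h1, h2, h3⟩ : {μ : FinPath G // μ.length = m ∧ μ.fsrc = u ∧ μ.frng = w}))
  simp [Real.exp_pos]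

theorem stmt15_aux (G : CDG)
    (hsc : ∀ v w : G.V, ∃ μ : FinPath G, 0 < μ.length ∧ μ.fsrc = v ∧ μ.frng = w)
    (F : G.A → ℝ) (β : ℝ) (v w : G.V)
    (h : ∑' n : ℕ, Apow G F β n v v = ⊤) :
    ∑' n : ℕ, Apow G F β n w w = ⊤ := by
  obtain ⟨μ, hμl, hμs, hμr⟩ := hsc w v
  obtain ⟨δ, hδl, hδs, hδr⟩ := hsc v w
  set m := μ.length with hm
  set k := δ.length with hk
  have hc : 0 < Apow G F β m w v := apow_pos G F β μ rfl hμs hμr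
  have hc' : 0 < Apow G F β k v w := apow_pos G F β δ rfl hδs hδr
  have hstep : ∀ n : ℕ, Apow G F β m w v * Apow G F β n v v * Apow G F β k v w
      ≤ Apow G F β (m + n + k) w w := fun n =>
    le_trans (mul_le_mul_left (apow_supermul G F β m n w v v) _)
      (apow_supermul G F β (m + n) k w v w)
  have h1 : (∑' n : ℕ, Apow G F β (m + n + k) w w) = ⊤ := by
    have he : (∑' n : ℕ,
        Apow G F β m w v * Apow G F β n v v * Apow G F β k v w) = ⊤ := by
      rw [ENNReal.tsum_mul_right, ENNReal.tsum_mul_left, h,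
        ENNReal.mul_top hc.ne', ENNReal.top_mul hc'.ne']
    exact top_le_iff.mp (he ▸ Summable.tsum_le_tsum hstep ENNReal.summable ENNReal.summable)
  refine top_le_iff.mp (le_trans h1.ge (Summable.tsum_le_tsum_of_inj
    (fun n => m + n + k) (fun a b hab => by dsimp at hab; omega)
    (fun c _ => zero_le) (fun n => le_rfl)
    ENNReal.summable ENNReal.summable))

end CDG

open CDG in
/-- for a strongly connected graph, `Σ_n A(β)^n_{v,v} = ∞` holds for one
vertex iff it holds for any other. -/
theorem stmt15 (G : CDG)
    (hsc : ∀ v w : G.V, ∃ μ : FinPath G, 0 < μ.length ∧ μ.fsrc = v ∧ μ.frng = w)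
    (F : G.A → ℝ) (β : ℝ) (v w : G.V) :
    (∑' n : ℕ, Apow G F β n v v = ⊤) ↔ (∑' n : ℕ, Apow G F β n w w = ⊤) :=
  ⟨stmt15_aux G hsc F β v w, stmt15_aux G hsc F β w v⟩
end
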